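/- For any probability measure μ on pure states of an N-dimensional Hilbert space, the t-th frame potential F^(t)(μ) = ∫∫ |⟨ψ|φ⟩|^{2t} dμ(ψ) dμ(φ) satisfies F^(t)(μ) - F^(t)_Haar = ‖∫(|ψ⟩⟨ψ|)^{⊗t} dμ(ψ) - ∫_Haar(|ψ⟩⟨ψ|)^{⊗t} dψ‖²_HS ≥ 0, where ‖·‖_HS is the Hilbert–Schmidt norm. Hence F^(t)(μ) ≥ F^(t)_Haar, with equality iff the t-th moment operator of μ equals the Haar t-th moment operator (i.e., μ is a state t-design). -/

import Mathlib

open MeasureTheory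

namespace FramePotAux

noncomputable def Pm (t : ℕ) {N : ℕ} (ψ : Fin N → ℂ) (x y : Fin t → Fin N) : ℂ :=
  ∏ i, ψ (x i) * (starRingEnd ℂ) (ψ (y i))

lemma expansion (t : ℕ) {N : ℕ} (ψ φ : Fin N → ℂ) :
    ((‖∑ i, (starRingEnd ℂ) (ψ i) * φ i‖ ^ (2 * t) : ℝ) : ℂ) =
      ∑ x : Fin t → Fin N, ∑ y : Fin t → Fin N, Pm t ψ y x * Pm t φ x y := by
  set z : ℂ := ∑ i, (starRingEnd ℂ) (ψ i) * φ i with hz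
  have h1 : ((‖z‖ ^ (2 * t) : ℝ) : ℂ) = z ^ t * ((starRingEnd ℂ) z) ^ t := by
    rw [pow_mul]
    push_cast
    rw [← mul_pow]
    congr 1
    rw [Complex.mul_conj]
    norm_cast
    rw [Complex.normSq_eq_norm_sq]
  have h2 : z ^ t = ∑ x : Fin t → Fin N, ∏ i, (starRingEnd ℂ) (ψ (x i)) * φ (x i) := by
    rw [hz, Finset.sum_pow', Fintype.piFinset_univ]
  have h3 : ((starRingEnd ℂ) z) ^ t
      = ∑ y : Fin t → Fin N, ∏ i, ψ (y i) * (starRingEnd ℂ) (φ (y i)) := by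
    have : (starRingEnd ℂ) z = ∑ i, ψ i * (starRingEnd ℂ) (φ i) := by
      rw [hz, map_sum]
      exact Finset.sum_congr rfl fun i _ => by simp [map_mul]
    rw [this, Finset.sum_pow', Fintype.piFinset_univ]
  rw [h1, h2, h3, Finset.sum_mul_sum]
  refine Finset.sum_congr rfl fun x _ => Finset.sum_congr rfl fun y _ => ?_
  unfold Pm
  rw [← Finset.prod_mul_distrib, ← Finset.prod_mul_distrib]
  exact Finset.prod_congr rfl fun i _ => by ring

lemma Pm_norm_le {t N : ℕ} {ψ : Fin N → ℂ} (h : ∑ i, ‖ψ i‖ ^ 2 = 1)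
    (x y : Fin t → Fin N) : ‖Pm t ψ x y‖ ≤ 1 := by
  have hb : ∀ j, ‖ψ j‖ ≤ 1 := by
    intro j
    have h1 : ‖ψ j‖ ^ 2 ≤ 1 := by
      rw [← h]
      exact Finset.single_le_sum (f := fun i => ‖ψ i‖ ^ 2) (fun i _ => sq_nonneg _) (Finset.mem_univ j)
    nlinarith [norm_nonneg (ψ j)]
  rw [Pm, norm_prod]
  apply Finset.prod_le_one (fun i _ => norm_nonneg _)
  intro i _
  rw [norm_mul, RCLike.norm_conj]
  calc ‖ψ (x i)‖ * ‖ψ (y i)‖ ≤ 1 * 1 :=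
        mul_le_mul (hb _) (hb _) (norm_nonneg _) zero_le_one
    _ = 1 := mul_one 1

lemma Pm_continuous {t N : ℕ} (x y : Fin t → Fin N) :
    Continuous fun ψ : Fin N → ℂ => Pm t ψ x y := by
  unfold Pm
  exact continuous_finset_prod _ fun i _ =>
    (continuous_apply (x i)).mul (continuous_star.comp (continuous_apply (y i)))

lemma Pm_integrable {t N : ℕ} (ρ : Measure (Fin N → ℂ)) [IsProbabilityMeasure ρ]
    (hs : ∀ᵐ ψ ∂ρ, ∑ i, ‖ψ i‖ ^ 2 = 1) (x y : Fin t → Fin N) :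
    Integrable (fun ψ => Pm t ψ x y) ρ := by
  refine Integrable.mono' (integrable_const 1) (Pm_continuous x y).aestronglyMeasurable ?_
  filter_upwards [hs] with ψ h
  exact Pm_norm_le h x y

lemma Pm_conj {t N : ℕ} (ψ : Fin N → ℂ) (x y : Fin t → Fin N) :
    (starRingEnd ℂ) (Pm t ψ x y) = Pm t ψ y x := by
  unfold Pm
  rw [map_prod]
  exact Finset.prod_congr rfl fun i _ => by simp only [map_mul, Complex.conj_conj]; ring

lemma inner_expand {t N : ℕ} (ρ : Measure (Fin N → ℂ)) [IsProbabilityMeasure ρ]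
    (hs : ∀ᵐ ψ ∂ρ, ∑ i, ‖ψ i‖ ^ 2 = 1) (ψ : Fin N → ℂ) :
    ∫ φ, ((‖∑ i, (starRingEnd ℂ) (ψ i) * φ i‖ ^ (2 * t) : ℝ) : ℂ) ∂ρ =
      ∑ x : Fin t → Fin N, ∑ y : Fin t → Fin N, Pm t ψ y x * ∫ φ, Pm t φ x y ∂ρ := by
  simp_rw [expansion t ψ]
  rw [integral_finset_sum _ fun x _ => integrable_finset_sum _ fun y _ =>
    (Pm_integrable ρ hs x y).const_mul _]
  refine Finset.sum_congr rfl fun x _ => ?_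
  rw [integral_finset_sum _ fun y _ => (Pm_integrable ρ hs x y).const_mul _]
  exact Finset.sum_congr rfl fun y _ => integral_const_mul _ _

lemma double_expand {t N : ℕ} (ρ₁ ρ₂ : Measure (Fin N → ℂ)) [IsProbabilityMeasure ρ₁]
    [IsProbabilityMeasure ρ₂] (hs₁ : ∀ᵐ ψ ∂ρ₁, ∑ i, ‖ψ i‖ ^ 2 = 1)
    (hs₂ : ∀ᵐ ψ ∂ρ₂, ∑ i, ‖ψ i‖ ^ 2 = 1) :
    ((∫ ψ, ∫ φ, ‖∑ i, (starRingEnd ℂ) (ψ i) * φ i‖ ^ (2 * t) ∂ρ₂ ∂ρ₁ : ℝ) : ℂ) =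
      ∑ x : Fin t → Fin N, ∑ y : Fin t → Fin N,
        (∫ ψ, Pm t ψ y x ∂ρ₁) * ∫ φ, Pm t φ x y ∂ρ₂ := by
  refine (integral_ofReal (𝕜 := ℂ)).symm.trans ?_
  calc ∫ ψ, ((∫ φ, ‖∑ i, (starRingEnd ℂ) (ψ i) * φ i‖ ^ (2 * t) ∂ρ₂ : ℝ) : ℂ) ∂ρ₁
      = ∫ ψ, (∑ x : Fin t → Fin N, ∑ y : Fin t → Fin N,
          Pm t ψ y x * ∫ φ, Pm t φ x y ∂ρ₂) ∂ρ₁ := by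
        refine integral_congr_ae (Filter.Eventually.of_forall fun ψ => ?_)
        exact (integral_ofReal (𝕜 := ℂ)).symm.trans (inner_expand ρ₂ hs₂ ψ)
    _ = _ := by
        rw [integral_finset_sum _ fun x _ => integrable_finset_sum _ fun y _ =>
          (Pm_integrable ρ₁ hs₁ y x).mul_const _]
        refine Finset.sum_congr rfl fun x _ => ?_
        rw [integral_finset_sum _ fun y _ => (Pm_integrable ρ₁ hs₁ y x).mul_const _]
        exact Finset.sum_congr rfl fun y _ => integral_mul_const _ _

lemma inner_mulVec {N : ℕ} (U : Matrix.unitaryGroup (Fin N) ℂ) (a φ : Fin N → ℂ) :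
    ∑ i, (starRingEnd ℂ) (((U : Matrix (Fin N) (Fin N) ℂ).mulVec a) i) *
      ((U : Matrix (Fin N) (Fin N) ℂ).mulVec φ) i = ∑ i, (starRingEnd ℂ) (a i) * φ i := by
  have key : dotProduct (star ((U : Matrix (Fin N) (Fin N) ℂ).mulVec a))
      ((U : Matrix (Fin N) (Fin N) ℂ).mulVec φ) = dotProduct (star a) φ := by
    rw [Matrix.star_mulVec, Matrix.dotProduct_mulVec, Matrix.vecMul_vecMul,
      ← Matrix.star_eq_conjTranspose, Matrix.UnitaryGroup.star_mul_self U, Matrix.vecMul_one]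
  exact key

lemma continuous_mulVec {N : ℕ} (A : Matrix (Fin N) (Fin N) ℂ) :
    Continuous fun ψ : Fin N → ℂ => A.mulVec ψ := by
  refine continuous_pi fun i => ?_
  have : (fun ψ : Fin N → ℂ => A.mulVec ψ i) = fun ψ => ∑ j, A i j * ψ j := by
    funext ψ; simp [Matrix.mulVec, dotProduct]
  rw [this]
  exact continuous_finset_sum _ fun j _ => continuous_const.mul (continuous_apply j)

lemma g_mulVec {N t : ℕ} (ν : Measure (Fin N → ℂ)) [IsProbabilityMeasure ν]
    (hinv : ∀ U : Matrix.unitaryGroup (Fin N) ℂ,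
      Measure.map (fun ψ => (U : Matrix (Fin N) (Fin N) ℂ).mulVec ψ) ν = ν)
    (U : Matrix.unitaryGroup (Fin N) ℂ) (a : Fin N → ℂ) :
    ∫ φ, ‖∑ i, (starRingEnd ℂ) (((U : Matrix (Fin N) (Fin N) ℂ).mulVec a) i) * φ i‖ ^ (2 * t) ∂ν
      = ∫ φ, ‖∑ i, (starRingEnd ℂ) (a i) * φ i‖ ^ (2 * t) ∂ν := by
  conv_lhs => rw [← hinv U]
  rw [integral_map (continuous_mulVec _).aemeasurable
    (Continuous.aestronglyMeasurable (by
      exact ((continuous_finset_sum _ fun i _ =>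
        continuous_const.mul (continuous_apply i)).norm.pow _)))]
  exact integral_congr_ae (Filter.Eventually.of_forall fun φ => by
    simp only []
    rw [inner_mulVec])

lemma exists_unitary {N : ℕ} (hN : 1 ≤ N) {ψ : Fin N → ℂ} (h : ∑ i, ‖ψ i‖ ^ 2 = 1) :
    ∃ U : Matrix.unitaryGroup (Fin N) ℂ,
      (U : Matrix (Fin N) (Fin N) ℂ).mulVec
        (fun j => if j = (⟨0, hN⟩ : Fin N) then 1 else 0) = ψ := by
  set i0 : Fin N := ⟨0, hN⟩
  let ψ' : EuclideanSpace ℂ (Fin N) := (WithLp.equiv 2 (Fin N → ℂ)).symm ψ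
  have hψ'norm : ‖ψ'‖ = 1 := by
    rw [EuclideanSpace.norm_eq]
    have : ∀ i, ‖ψ' i‖ = ‖ψ i‖ := fun i => rfl
    simp only [this, h, Real.sqrt_one]
  have hon : Orthonormal ℂ (Set.restrict {i0} (fun _ : Fin N => ψ')) := by
    constructor
    · rintro ⟨i, hi⟩
      exact hψ'norm
    · rintro ⟨i, hi⟩ ⟨j, hj⟩ hij
      exfalso
      apply hij
      simp only [Set.mem_singleton_iff] at hi hj
      exact Subtype.ext (hi.trans hj.symm)
  obtain ⟨b, hb⟩ := hon.exists_orthonormalBasis_extension_of_card_eq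
    (by simp)
  have hb0 : b i0 = ψ' := hb i0 rfl
  set U : Matrix (Fin N) (Fin N) ℂ := Matrix.of fun i j => b j i with hU
  have hUmem : U ∈ Matrix.unitaryGroup (Fin N) ℂ := by
    rw [Matrix.mem_unitaryGroup_iff']
    ext j k
    have horth := orthonormal_iff_ite.mp b.orthonormal j k
    rw [PiLp.inner_apply] at horth
    simp only [RCLike.inner_apply] at horth
    rw [Matrix.mul_apply, Matrix.one_apply]
    simp only [Matrix.star_apply, hU, Matrix.of_apply]
    convert horth using 2
    exact mul_comm _ _
  refine ⟨⟨U, hUmem⟩, ?_⟩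
  funext i
  show ∑ j, U i j * (if j = i0 then (1:ℂ) else 0) = ψ i
  rw [Finset.sum_eq_single i0]
  · simp [hU, hb0]
    rfl
  · intro j _ hj
    simp [hj]
  · intro hmem
    exact absurd (Finset.mem_univ i0) hmem

end FramePotAux

open FramePotAux

/-- For any probability measure `μ` on pure states of an `N`-dimensional Hilbert space
(modelled as a measure on `ℂ^N` supported on the unit sphere), and for the Haar measure
`ν` (an arbitrary unitarily invariant probability measure supported on the unit sphere),
the `t`-th frame potential `F⁽ᵗ⁾(ρ) = ∫∫ |⟨ψ|φ⟩|^(2t) dρdρ` satisfies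
`F⁽ᵗ⁾(μ) - F⁽ᵗ⁾(Haar) = ‖M_μ - M_Haar‖²_HS ≥ 0`, where `M_ρ = ∫ (|ψ⟩⟨ψ|)^{⊗t} dρ`
is the `t`-th moment operator.  Hence `F⁽ᵗ⁾(μ) ≥ F⁽ᵗ⁾(Haar)`, with equality iff
`M_μ = M_Haar`, i.e. iff `μ` is a state `t`-design. -/
theorem frame_potential_ge_haar (N t : ℕ) (hN : 1 ≤ N) (ht : 1 ≤ t)
    (μ ν : Measure (Fin N → ℂ))
    [IsProbabilityMeasure μ] [IsProbabilityMeasure ν]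
    (hμs : ∀ᵐ ψ ∂μ, ∑ i, ‖ψ i‖ ^ 2 = 1) (hνs : ∀ᵐ ψ ∂ν, ∑ i, ‖ψ i‖ ^ 2 = 1)
    (hinv : ∀ U : Matrix.unitaryGroup (Fin N) ℂ,
      Measure.map (fun ψ => (U : Matrix (Fin N) (Fin N) ℂ).mulVec ψ) ν = ν) :
    let M : Measure (Fin N → ℂ) → Matrix (Fin t → Fin N) (Fin t → Fin N) ℂ :=
      fun ρ => fun x y => ∫ ψ, (∏ i, ψ (x i) * starRingEnd ℂ (ψ (y i))) ∂ρ
    let Fp : Measure (Fin N → ℂ) → ℝ :=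
      fun ρ => ∫ ψ, ∫ φ, ‖∑ i, starRingEnd ℂ (ψ i) * φ i‖ ^ (2 * t) ∂ρ ∂ρ
    (Fp μ - Fp ν = ∑ x, ∑ y, ‖M μ x y - M ν x y‖ ^ 2) ∧
    Fp ν ≤ Fp μ ∧
    (Fp μ = Fp ν ↔ M μ = M ν) := by
  intro M Fp
  set e0 : Fin N → ℂ := fun j => if j = (⟨0, hN⟩ : Fin N) then 1 else 0 with he0
  -- the inner frame-potential function against ν is constant on the unit sphere
  have gconst : ∀ {ψ : Fin N → ℂ}, (∑ i, ‖ψ i‖ ^ 2 = 1) →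
      ∫ φ, ‖∑ i, (starRingEnd ℂ) (ψ i) * φ i‖ ^ (2 * t) ∂ν
        = ∫ φ, ‖∑ i, (starRingEnd ℂ) (e0 i) * φ i‖ ^ (2 * t) ∂ν := by
    intro ψ h
    obtain ⟨U, hU⟩ := exists_unitary hN h
    rw [← hU]
    exact g_mulVec ν hinv U e0
  set c : ℝ := ∫ φ, ‖∑ i, (starRingEnd ℂ) (e0 i) * φ i‖ ^ (2 * t) ∂ν with hc
  have hcμ : ∫ ψ, ∫ φ, ‖∑ i, (starRingEnd ℂ) (ψ i) * φ i‖ ^ (2 * t) ∂ν ∂μ = c := by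
    have hae : (fun ψ => ∫ φ, ‖∑ i, (starRingEnd ℂ) (ψ i) * φ i‖ ^ (2 * t) ∂ν)
        =ᵐ[μ] fun _ => c := by
      filter_upwards [hμs] with ψ h using gconst h
    rw [integral_congr_ae hae, integral_const, probReal_univ, one_smul]
  have hcν : ∫ ψ, ∫ φ, ‖∑ i, (starRingEnd ℂ) (ψ i) * φ i‖ ^ (2 * t) ∂ν ∂ν = c := by
    have hae : (fun ψ => ∫ φ, ‖∑ i, (starRingEnd ℂ) (ψ i) * φ i‖ ^ (2 * t) ∂ν)
        =ᵐ[ν] fun _ => c := by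
      filter_upwards [hνs] with ψ h using gconst h
    rw [integral_congr_ae hae, integral_const, probReal_univ, one_smul]
  have hFpν : Fp ν = c := hcν
  have E1 : ((Fp μ : ℝ) : ℂ) = ∑ x : Fin t → Fin N, ∑ y : Fin t → Fin N,
      (∫ ψ, Pm t ψ y x ∂μ) * ∫ φ, Pm t φ x y ∂μ := double_expand μ μ hμs hμs
  have E2 : ((Fp ν : ℝ) : ℂ) = ∑ x : Fin t → Fin N, ∑ y : Fin t → Fin N,
      (∫ ψ, Pm t ψ y x ∂ν) * ∫ φ, Pm t φ x y ∂ν := double_expand ν ν hνs hνs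
  have E3 : ((Fp ν : ℝ) : ℂ) = ∑ x : Fin t → Fin N, ∑ y : Fin t → Fin N,
      (∫ ψ, Pm t ψ y x ∂μ) * ∫ φ, Pm t φ x y ∂ν := by
    rw [hFpν, ← hcμ]
    exact double_expand μ ν hμs hνs
  have hMdef : ∀ (ρ : Measure (Fin N → ℂ)) (x y : Fin t → Fin N),
      M ρ x y = ∫ ψ, Pm t ψ x y ∂ρ := fun ρ x y => rfl
  have E1' : ((Fp μ : ℝ) : ℂ) = ∑ x : Fin t → Fin N, ∑ y : Fin t → Fin N,
      M μ y x * M μ x y := by simpa only [hMdef] using E1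
  have E2' : ((Fp ν : ℝ) : ℂ) = ∑ x : Fin t → Fin N, ∑ y : Fin t → Fin N,
      M ν y x * M ν x y := by simpa only [hMdef] using E2
  have E3' : ((Fp ν : ℝ) : ℂ) = ∑ x : Fin t → Fin N, ∑ y : Fin t → Fin N,
      M μ y x * M ν x y := by simpa only [hMdef] using E3
  have herm : ∀ (ρ : Measure (Fin N → ℂ)) (x y : Fin t → Fin N),
      (starRingEnd ℂ) (M ρ x y) = M ρ y x := by
    intro ρ x y
    rw [hMdef, hMdef, ← integral_conj]
    exact integral_congr_ae (Filter.Eventually.of_forall fun ψ => Pm_conj ψ x y)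
  have normsq_c : ∀ w : ℂ, ((‖w‖ : ℝ) : ℂ) ^ 2 = w * (starRingEnd ℂ) w := by
    intro w
    rw [Complex.mul_conj]
    norm_cast
    rw [Complex.normSq_eq_norm_sq]
  have hSC : ((∑ x : Fin t → Fin N, ∑ y : Fin t → Fin N, ‖M μ x y - M ν x y‖ ^ 2 : ℝ) : ℂ)
      = ((Fp μ : ℝ) : ℂ) - ((Fp ν : ℝ) : ℂ) := by
    push_cast
    have expand : ∀ x y : Fin t → Fin N, ((‖M μ x y - M ν x y‖ : ℝ) : ℂ) ^ 2
        = M μ x y * M μ y x - M μ x y * M ν y x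
          - (M ν x y * M μ y x - M ν x y * M ν y x) := by
      intro x y
      rw [normsq_c, map_sub, herm μ, herm ν]
      ring
    simp_rw [expand]
    simp only [Finset.sum_sub_distrib]
    have h1 : ∑ x : Fin t → Fin N, ∑ y : Fin t → Fin N, M μ x y * M μ y x
        = ((Fp μ : ℝ) : ℂ) := by rw [Finset.sum_comm]; exact E1'.symm
    have h2 : ∑ x : Fin t → Fin N, ∑ y : Fin t → Fin N, M μ x y * M ν y x
        = ((Fp ν : ℝ) : ℂ) := by rw [Finset.sum_comm]; exact E3'.symm
    have h3 : ∑ x : Fin t → Fin N, ∑ y : Fin t → Fin N, M ν x y * M μ y x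
        = ((Fp ν : ℝ) : ℂ) :=
      (Finset.sum_congr rfl fun x _ => Finset.sum_congr rfl fun y _ =>
        mul_comm _ _).trans E3'.symm
    have h4 : ∑ x : Fin t → Fin N, ∑ y : Fin t → Fin N, M ν x y * M ν y x
        = ((Fp ν : ℝ) : ℂ) := by rw [Finset.sum_comm]; exact E2'.symm
    rw [h1, h2, h3, h4]
    ring
  have key : Fp μ - Fp ν = ∑ x, ∑ y, ‖M μ x y - M ν x y‖ ^ 2 := by
    rw [← Complex.ofReal_sub] at hSC
    exact (Complex.ofReal_injective hSC).symm
  have hS0 : (0 : ℝ) ≤ ∑ x, ∑ y, ‖M μ x y - M ν x y‖ ^ 2 :=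
    Finset.sum_nonneg fun x _ => Finset.sum_nonneg fun y _ => pow_nonneg (norm_nonneg _) 2
  refine ⟨key, by linarith, ?_, ?_⟩
  · intro heq
    have hzero : ∑ x, ∑ y, ‖M μ x y - M ν x y‖ ^ 2 = (0 : ℝ) := by
      rw [← key, heq, sub_self]
    funext x y
    have hx := (Finset.sum_eq_zero_iff_of_nonneg
      (fun x _ => Finset.sum_nonneg fun y _ => pow_nonneg (norm_nonneg _) 2)).mp hzero
    have hy := (Finset.sum_eq_zero_iff_of_nonneg
      (fun y _ => pow_nonneg (norm_nonneg _) 2)).mp (hx x (Finset.mem_univ x))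
    have hxy : ‖M μ x y - M ν x y‖ ^ 2 = 0 := hy y (Finset.mem_univ y)
    have : ‖M μ x y - M ν x y‖ = 0 := by
      nlinarith [norm_nonneg (M μ x y - M ν x y)]
    exact sub_eq_zero.mp (norm_eq_zero.mp this)
  · intro heq
    rw [heq] at key
    simp only [sub_self, norm_zero, ne_eq, OfNat.ofNat_ne_zero, not_false_eq_true,
      zero_pow, Finset.sum_const_zero] at key
    linarith
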